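/- For n ≥ 3, the set of prefixes of length f_{2(n−1)} − 1 of words in A_n equals the set of prefixes of length f_{2(n−1)} − 1 of words in A_{n+1}; that is, A_n[1, f_{2(n−1)}−1] = A_{n+1}[1, f_{2(n−1)}−1]. -/

import Mathlib

/-- The two-letter alphabet. -/
inductive Letter : Type
  | a : Letter
  | b : Letter
deriving DecidableEq

/-- A word is a finite sequence of letters. -/
abbrev Word := List Letter

/-- Concatenation set `UV = {uv : u ∈ U, v ∈ V}`. -/
def concatSet (U V : Set Word) : Set Word := {w | ∃ u ∈ U, ∃ v ∈ V, w = u ++ v}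

mutual
  /-- The sets `A_n` of inflated words (indexed so that `Aset 1 = {a}`). -/
  def Aset : ℕ → Set Word
    | 0 => ∅
    | 1 => {[Letter.a]}
    | n + 2 => concatSet (Bset (n + 1)) (concatSet (Aset (n + 1)) (Aset (n + 1)))
  /-- The sets `B_n` of inflated words (indexed so that `Bset 1 = {b}`). -/
  def Bset : ℕ → Set Word
    | 0 => ∅
    | 1 => {[Letter.b]}
    | n + 2 => concatSet (Aset (n + 1)) (Bset (n + 1)) ∪ concatSet (Bset (n + 1)) (Aset (n + 1))
end

/-- The sub-word `w[a,b] = w_a w_{a+1} … w_b` (1-indexed). -/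
def wordSlice (w : Word) (i j : ℕ) : Word := (w.drop (i - 1)).take (j - i + 1)

/-- `W[a,b] = {w[a,b] : w ∈ W}`. -/
def setSlice (W : Set Word) (i j : ℕ) : Set Word := {x | ∃ w ∈ W, x = wordSlice w i j}

/-- `x` is a sub-word (contiguous factor) of `w`. -/
def IsFactor (x w : Word) : Prop := ∃ u v : Word, w = u ++ x ++ v

/-- `F(S, m)`: the set of all sub-words of length `m` of words in `S`. -/
def FactorSet (S : Set Word) (m : ℕ) : Set Word :=
  {x | x.length = m ∧ ∃ w ∈ S, IsFactor x w}

/-- `F(A, m) = ⋃_{n ≥ 1} F(A_n, m)`. -/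
def FA (m : ℕ) : Set Word := ⋃ n ∈ {n : ℕ | 1 ≤ n}, FactorSet (Aset n) m

/-- `F(B, m) = ⋃_{n ≥ 1} F(B_n, m)`. -/
def FB (m : ℕ) : Set Word := ⋃ n ∈ {n : ℕ | 1 ≤ n}, FactorSet (Bset n) m

/-- The golden mean `τ = (1 + √5)/2`. -/
noncomputable def tau : ℝ := (1 + Real.sqrt 5) / 2

lemma ab_lengths (m : ℕ) :
    (∀ w ∈ Aset (m+1), w.length = Nat.fib (2*m+2)) ∧
    (∀ w ∈ Bset (m+1), w.length = Nat.fib (2*m+1)) := by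
  induction m with
  | zero =>
    refine ⟨fun w hw => ?_, fun w hw => ?_⟩
    · simp only [Aset, Set.mem_singleton_iff] at hw; subst hw; rfl
    · simp only [Bset, Set.mem_singleton_iff] at hw; subst hw; rfl
  | succ m ih =>
    obtain ⟨ihA, ihB⟩ := ih
    have h1 : Nat.fib (2*(m+1)+1) = Nat.fib (2*m+1) + Nat.fib (2*m+2) := by
      rw [show 2*(m+1)+1 = (2*m+1)+2 by ring, Nat.fib_add_two,
        show 2*m+1+1 = 2*m+2 by ring]
    have h2 : Nat.fib (2*(m+1)+2) = Nat.fib (2*m+2) + Nat.fib (2*(m+1)+1) := by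
      rw [show 2*(m+1)+2 = (2*m+2)+2 by ring, Nat.fib_add_two,
        show 2*m+2+1 = 2*(m+1)+1 by ring]
    refine ⟨?_, ?_⟩
    · rintro w ⟨u, hu, v, ⟨v1, hv1, v2, hv2, rfl⟩, rfl⟩
      have e1 := ihB u hu; have e2 := ihA v1 hv1; have e3 := ihA v2 hv2
      simp only [List.length_append]
      omega
    · rintro w (⟨u, hu, v, hv, rfl⟩ | ⟨u, hu, v, hv, rfl⟩)
      · have e1 := ihA u hu; have e2 := ihB v hv
        simp only [List.length_append]; omega
      · have e1 := ihB u hu; have e2 := ihA v hv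
        simp only [List.length_append]; omega

lemma ab_nonempty (m : ℕ) : (Aset (m+1)).Nonempty ∧ (Bset (m+1)).Nonempty := by
  induction m with
  | zero => exact ⟨⟨[Letter.a], rfl⟩, ⟨[Letter.b], rfl⟩⟩
  | succ m ih =>
    obtain ⟨⟨a, ha⟩, ⟨b, hb⟩⟩ := ih
    exact ⟨⟨b ++ (a ++ a), b, hb, a ++ a, ⟨a, ha, a, ha, rfl⟩, rfl⟩,
           ⟨a ++ b, Or.inl ⟨a, ha, b, hb, rfl⟩⟩⟩

lemma a_ne_nil {m : ℕ} {w : Word} (hw : w ∈ Aset (m+1)) : w ≠ [] := by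
  intro h
  have := (ab_lengths m).1 w hw
  rw [h] at this
  have hp := Nat.fib_pos.mpr (show 0 < 2*m+2 by omega)
  simp at this; omega

lemma dropLast_prefix (m : ℕ) : ∀ x ∈ Aset (m+1),
    ∃ w ∈ concatSet (Bset (m+1)) (Aset (m+1)), x.dropLast <+: w := by
  induction m with
  | zero =>
    intro x hx
    simp only [Aset, Set.mem_singleton_iff] at hx
    subst hx
    exact ⟨[Letter.b] ++ [Letter.a], ⟨[Letter.b], rfl, [Letter.a], rfl, rfl⟩, by simp⟩
  | succ m ih =>
    rintro x ⟨b, hb, v, ⟨a1, ha1, a2, ha2, rfl⟩, rfl⟩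
    obtain ⟨w', ⟨c, hc, d, hd, rfl⟩, hpre⟩ := ih a2 ha2
    obtain ⟨e, he⟩ := (ab_nonempty m).1
    refine ⟨(b ++ a1) ++ (c ++ (d ++ e)),
      ⟨b ++ a1, Or.inr ⟨b, hb, a1, ha1, rfl⟩,
       c ++ (d ++ e), ⟨c, hc, d ++ e, ⟨d, hd, e, he, rfl⟩, rfl⟩, rfl⟩, ?_⟩
    have hdl : (b ++ (a1 ++ a2)).dropLast = (b ++ a1) ++ a2.dropLast := by
      rw [← List.append_assoc, List.dropLast_append_of_ne_nil (a_ne_nil ha2)]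
    rw [hdl]
    obtain ⟨t, ht⟩ := hpre
    refine ⟨t ++ e, ?_⟩
    simp only [List.append_assoc]
    rw [← List.append_assoc (List.dropLast a2), ht, List.append_assoc]

theorem prefix_Aset_eq_succ (n : ℕ) (hn : 3 ≤ n) :
    setSlice (Aset n) 1 (Nat.fib (2 * (n - 1)) - 1) =
      setSlice (Aset (n + 1)) 1 (Nat.fib (2 * (n - 1)) - 1) := by
  obtain ⟨m, rfl⟩ : ∃ m, n = m + 3 := ⟨n - 3, by omega⟩
  have hidx : 2 * (m + 3 - 1) = 2*m+4 := by omega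
  rw [hidx]
  set L := Nat.fib (2*m+4) - 1 with hLdef
  have hfib3 : Nat.fib (2*m+3) = Nat.fib (2*m+1) + Nat.fib (2*m+2) :=
    Nat.fib_add_two
  have hfib4 : Nat.fib (2*m+4) = Nat.fib (2*m+2) + Nat.fib (2*m+3) :=
    Nat.fib_add_two
  have hfib5 : Nat.fib (2*m+5) = Nat.fib (2*m+3) + Nat.fib (2*m+4) :=
    Nat.fib_add_two
  have h3 : 3 ≤ Nat.fib (2*m+4) := by
    calc 3 = Nat.fib 4 := rfl
    _ ≤ Nat.fib (2*m+4) := Nat.fib_mono (by omega)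
  have hslice : ∀ w : Word, wordSlice w 1 L = w.take L := by
    intro w
    have : L - 1 + 1 = L := by omega
    simp [wordSlice, this]
  have lenA := fun k => (ab_lengths k).1
  have lenB := fun k => (ab_lengths k).2
  ext x
  constructor
  · rintro ⟨w, ⟨y, hy, v, ⟨z1, hz1, z2, hz2, rfl⟩, rfl⟩, rfl⟩
    -- x = take L (y ++ (z1 ++ z2)), y ∈ B_{m+2}, z1 z2 ∈ A_{m+2}
    obtain ⟨p, hp⟩ := (ab_nonempty (m+2)).1
    have hlen : L ≤ (y ++ z1).length := by
      have l1 := lenB (m+1) y hy; have l2 := lenA (m+1) z1 hz1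
      rw [show 2*(m+1)+1 = 2*m+3 by ring] at l1
      rw [show 2*(m+1)+2 = 2*m+4 by ring] at l2
      simp only [List.length_append]; omega
    refine ⟨(y ++ z1) ++ (p ++ p),
      ⟨y ++ z1, Or.inr ⟨y, hy, z1, hz1, rfl⟩, p ++ p, ⟨p, hp, p, hp, rfl⟩, rfl⟩, ?_⟩
    rw [hslice, hslice, ← List.append_assoc,
      List.take_append_of_le_length hlen, List.take_append_of_le_length hlen]
  · rintro ⟨w, ⟨y, hy, v, ⟨z1, hz1, z2, hz2, rfl⟩, rfl⟩, rfl⟩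
    -- w = y ++ (z1 ++ z2), y ∈ B_{m+3}, z1 z2 ∈ A_{m+3}
    have hyL : L ≤ y.length := by
      have l1 := lenB (m+2) y hy
      rw [show 2*(m+2)+1 = 2*m+5 by ring] at l1
      omega
    rw [hslice, List.take_append_of_le_length hyL]
    rcases hy with ⟨a, ha, b, hb, rfl⟩ | ⟨b, hb, a, ha, rfl⟩
    · -- y = a ++ b, a ∈ A_{m+2}
      have haL : a.length = L + 1 := by
        have l1 := lenA (m+1) a ha
        rw [show 2*(m+1)+2 = 2*m+4 by ring] at l1
        omega
      have htake : (a ++ b).take L = a.dropLast := by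
        rw [List.take_append_of_le_length (by omega), List.dropLast_eq_take, haL]
        simp
      obtain ⟨w', ⟨c, hc, d, hd, rfl⟩, hpre⟩ := dropLast_prefix (m+1) a ha
      obtain ⟨e, he⟩ := (ab_nonempty (m+1)).1
      refine ⟨c ++ (d ++ e),
        ⟨c, hc, d ++ e, ⟨d, hd, e, he, rfl⟩, rfl⟩, ?_⟩
      rw [hslice, htake]
      have hpre2 : a.dropLast <+: c ++ (d ++ e) := by
        obtain ⟨t, ht⟩ := hpre
        exact ⟨t ++ e, by rw [← List.append_assoc, ← List.append_assoc, ht,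
          List.append_assoc]⟩
      have hlend : a.dropLast.length = L := by
        rw [List.length_dropLast, haL]; omega
      rw [List.prefix_iff_eq_take.mp hpre2, hlend]
    · -- y = b ++ a, b ∈ B_{m+2}, a ∈ A_{m+2}
      obtain ⟨e, he⟩ := (ab_nonempty (m+1)).1
      have hlen : L ≤ (b ++ a).length := by
        have l1 := lenB (m+1) b hb; have l2 := lenA (m+1) a ha
        rw [show 2*(m+1)+1 = 2*m+3 by ring] at l1
        rw [show 2*(m+1)+2 = 2*m+4 by ring] at l2
        simp only [List.length_append]; omega
      refine ⟨b ++ (a ++ e),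
        ⟨b, hb, a ++ e, ⟨a, ha, e, he, rfl⟩, rfl⟩, ?_⟩
      rw [hslice, ← List.append_assoc, List.take_append_of_le_length hlen]
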